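/- Let X and Y be finite sets and p_{Y|X} a conditional probability distribution from X to Y. Define W_dmcfb : {0} → DCCone(Y) by W_dmcfb(0) := ⋃_{x∈X} {a ∈ ℝ^Y : Σ_{y∈Y} p_{Y|X}(y|x) a(y) ≤ 0}. Then for all positive integers n, L and every 0 < ε < 1, the channel coding game (W_dmcfb, n, L, ε) is a guaranteed win if and only if there exists a feedback coding scheme for the discrete memoryless channel p_{Y|X} with blocklength n, message cardinality L and maximum error probability ε. -/

import Mathlib

open scoped BigOperators

noncomputable section

/-- The prefix `y^{i-1} = (y_0, …, y_{i-1})` of `y : Fin n → Y`, i.e. the first `i` entries. -/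
def prefixOf {Y : Type*} {n : ℕ} (y : Fin n → Y) (i : Fin n) : Fin i.1 → Y :=
  fun j => y ⟨j.1, j.2.trans i.2⟩

/-- `A ⊆ ℝ^Y` is a pricing downward closed (DC) cone. -/
def IsDCCone {Y : Type*} (A : Set (Y → ℝ)) : Prop :=
  (∀ a ∈ A, ∀ γ : ℝ, 0 ≤ γ → γ • a ∈ A) ∧
  (∀ a ∈ A, ∀ b : Y → ℝ, (∀ y, 0 ≤ b y) → a - b ∈ A)

/-- The channel coding game `(W, n, L, ε)` is a guaranteed win. -/
def GuaranteedWin {X Y : Type*} (W : X → Set (Y → ℝ)) (n L : ℕ) (ε : ℝ) : Prop :=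
  ∃ (x : Fin L → Fin n → X)
    (w : (i : Fin n) → Fin L → (Fin i.1 → Y) → (Y → ℝ))
    (dec : (Fin n → Y) → Fin L),
    (∀ (i : Fin n) (m : Fin L) (ypre : Fin i.1 → Y), w i m ypre ∈ W (x m i)) ∧
    (∀ (m : Fin L) (y : Fin n → Y),
      (∑ i, w i m (prefixOf y i) (y i)) - (if dec y = m then 0 else 1) ≥ -ε)


section Aux

variable {Y : Type*} [Fintype Y] [DecidableEq Y] {n : ℕ}

/-- Conditional expectation of reward `r` given the first `i` coordinates of `u`,
under transitions `Q`. -/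
def Ecal (Q : Fin n → (Fin n → Y) → Y → ℝ) (r : (Fin n → Y) → ℝ) (i : ℕ) (u : Fin n → Y) : ℝ :=
  ∑ z : Fin n → Y,
    if ∀ j : Fin n, j.1 < i → z j = u j then
      (∏ j : Fin n, if i ≤ j.1 then Q j z (z j) else 1) * r z
    else 0

variable (Q : Fin n → (Fin n → Y) → Y → ℝ)

lemma Ecal_top (r : (Fin n → Y) → ℝ) (u : Fin n → Y) : Ecal Q r n u = r u := by
  unfold Ecal
  have h1 : ∀ z : Fin n → Y, (∀ j : Fin n, j.1 < n → z j = u j) ↔ z = u :=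
    fun z => ⟨fun h => funext fun j => h j j.2, fun h j _ => by rw [h]⟩
  simp only [h1]
  rw [Finset.sum_ite_eq' Finset.univ u]
  have h2 : ∀ j : Fin n, ¬ (n ≤ j.1) := fun j => not_le.2 j.2
  simp [h2]

lemma Ecal_depends (r : (Fin n → Y) → ℝ) (i : ℕ) (u u' : Fin n → Y)
    (h : ∀ j : Fin n, j.1 < i → u j = u' j) : Ecal Q r i u = Ecal Q r i u' := by
  unfold Ecal
  refine Finset.sum_congr rfl fun z _ => ?_
  refine if_congr ?_ rfl rfl
  constructor
  · intro hz j hj; rw [hz j hj, h j hj]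
  · intro hz j hj; rw [hz j hj, h j hj]

lemma Ecal_succ (hQpre : ∀ (i : Fin n) (u u' : Fin n → Y),
      (∀ j : Fin n, j.1 < i.1 → u j = u' j) → Q i u = Q i u')
    (r : (Fin n → Y) → ℝ) (i : Fin n) (u : Fin n → Y) :
    Ecal Q r i.1 u = ∑ c : Y, Q i u c * Ecal Q r (i.1+1) (Function.update u i c) := by
  unfold Ecal
  simp_rw [Finset.mul_sum]
  rw [Finset.sum_comm]
  refine Finset.sum_congr rfl fun z _ => ?_
  have hcond : ∀ c : Y,
      (∀ j : Fin n, j.1 < i.1+1 → z j = Function.update u i c j) ↔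
        (c = z i ∧ ∀ j : Fin n, j.1 < i.1 → z j = u j) := by
    intro c
    constructor
    · intro h
      refine ⟨?_, fun j hj => ?_⟩
      · have := h i (Nat.lt_succ_self _)
        rw [Function.update_self] at this
        exact this.symm
      · have hji : j ≠ i := Fin.ne_of_val_ne (Nat.ne_of_lt hj)
        have := h j (Nat.lt_succ_of_lt hj)
        rwa [Function.update_of_ne hji] at this
    · rintro ⟨hc, h⟩ j hj
      rcases Nat.lt_succ_iff_lt_or_eq.1 hj with hj' | hj'
      · rw [Function.update_of_ne (Fin.ne_of_val_ne (Nat.ne_of_lt hj')), h j hj']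
      · have : j = i := Fin.ext hj'
        subst this; rw [Function.update_self, hc]
  simp only [hcond]
  have hstep : ∀ c : Y,
      Q i u c * (if (c = z i ∧ ∀ j : Fin n, j.1 < i.1 → z j = u j) then
          (∏ j : Fin n, if i.1+1 ≤ j.1 then Q j z (z j) else 1) * r z else 0)
      = if c = z i then
          (if (∀ j : Fin n, j.1 < i.1 → z j = u j) then
            Q i u c * ((∏ j : Fin n, if i.1+1 ≤ j.1 then Q j z (z j) else 1) * r z) else 0)
        else 0 := by
    intro c
    by_cases h1 : c = z i <;> by_cases h2 : (∀ j : Fin n, j.1 < i.1 → z j = u j) <;>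
      simp [h1, h2]
  rw [Finset.sum_congr rfl (fun c _ => hstep c), Finset.sum_ite_eq' Finset.univ (z i)]
  simp only [Finset.mem_univ, if_true]
  by_cases h2 : (∀ j : Fin n, j.1 < i.1 → z j = u j)
  · rw [if_pos h2, if_pos h2]
    have hpeel : (∏ j : Fin n, if i.1 ≤ j.1 then Q j z (z j) else 1)
        = Q i z (z i) * ∏ j ∈ Finset.univ.erase i, (if i.1 ≤ j.1 then Q j z (z j) else 1) := by
      rw [← Finset.mul_prod_erase Finset.univ _ (Finset.mem_univ i), if_pos (le_refl _)]
    have hpeel' : (∏ j : Fin n, if i.1+1 ≤ j.1 then Q j z (z j) else 1)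
        = ∏ j ∈ Finset.univ.erase i, (if i.1 ≤ j.1 then Q j z (z j) else 1) := by
      rw [← Finset.mul_prod_erase Finset.univ _ (Finset.mem_univ i), if_neg (by omega)]
      rw [one_mul]
      refine Finset.prod_congr rfl fun j hj => ?_
      have hne : j.1 ≠ i.1 := Fin.val_ne_of_ne (Finset.ne_of_mem_erase hj)
      exact if_congr (by omega) rfl rfl
    rw [hpeel, hpeel', hQpre i z u h2]
    ring
  · rw [if_neg h2, if_neg h2]

lemma Ecal_of_depends (hQpre : ∀ (i : Fin n) (u u' : Fin n → Y),
      (∀ j : Fin n, j.1 < i.1 → u j = u' j) → Q i u = Q i u')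
    (hQ1 : ∀ (i : Fin n) (u : Fin n → Y), ∑ c, Q i u c = 1)
    (r : (Fin n → Y) → ℝ) :
    ∀ (k t : ℕ), t + k = n →
      (∀ u u' : Fin n → Y, (∀ j : Fin n, j.1 < t → u j = u' j) → r u = r u') →
      ∀ u : Fin n → Y, Ecal Q r t u = r u := by
  intro k
  induction k with
  | zero =>
    intro t ht _ u
    have : t = n := by omega
    subst this; exact Ecal_top Q r u
  | succ k ih =>
    intro t ht hdep u
    have htn : t < n := by omega
    have := Ecal_succ Q hQpre r ⟨t, htn⟩ u
    rw [this]
    have h1 : ∀ c : Y, Ecal Q r (t+1) (Function.update u ⟨t, htn⟩ c) = r u := by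
      intro c
      rw [ih (t+1) (by omega)
        (fun v v' hv => hdep v v' (fun j hj => hv j (Nat.lt_succ_of_lt hj)))]
      refine hdep _ _ fun j hj => ?_
      rw [Function.update_of_ne (Fin.ne_of_val_ne (by omega : j.1 ≠ t))]
    simp_rw [h1, ← Finset.sum_mul, hQ1 ⟨t, htn⟩ u, one_mul]

lemma Ecal_nonpos (hQpre : ∀ (i : Fin n) (u u' : Fin n → Y),
      (∀ j : Fin n, j.1 < i.1 → u j = u' j) → Q i u = Q i u')
    (hQ1 : ∀ (i : Fin n) (u : Fin n → Y), ∑ c, Q i u c = 1)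
    (hQ0 : ∀ (i : Fin n) (u : Fin n → Y) (c : Y), 0 ≤ Q i u c)
    (i : Fin n) (r : (Fin n → Y) → ℝ)
    (hdep : ∀ u u' : Fin n → Y, (∀ j : Fin n, j.1 < i.1+1 → u j = u' j) → r u = r u')
    (hstep : ∀ u : Fin n → Y, ∑ c, Q i u c * r (Function.update u i c) ≤ 0) :
    ∀ (k t : ℕ), t + k = n → t ≤ i.1 → ∀ u : Fin n → Y, Ecal Q r t u ≤ 0 := by
  intro k
  induction k with
  | zero =>
    intro t ht hti _
    exact absurd hti (by have := i.2; omega)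
  | succ k ih =>
    intro t ht hti u
    have htn : t < n := by omega
    rcases eq_or_lt_of_le hti with heq | hlt
    · have hieq : (⟨t, htn⟩ : Fin n) = i := Fin.ext heq
      rw [Ecal_succ Q hQpre r ⟨t, htn⟩ u, hieq]
      have h1 : ∀ c : Y, Ecal Q r (i.1+1) (Function.update u i c)
          = r (Function.update u i c) := fun c =>
        Ecal_of_depends Q hQpre hQ1 r k (i.1+1) (by omega)
          (fun v v' hv => hdep v v' (fun j hj => hv j (by omega))) _
      simp_rw [h1]
      exact hstep u
    · rw [Ecal_succ Q hQpre r ⟨t, htn⟩ u]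
      refine Finset.sum_nonpos fun c _ => mul_nonpos_of_nonneg_of_nonpos (hQ0 _ _ _) ?_
      exact ih (t+1) (by omega) hlt _

lemma Ecal_mono (hQ0 : ∀ (i : Fin n) (u : Fin n → Y) (c : Y), 0 ≤ Q i u c)
    (r r' : (Fin n → Y) → ℝ) (h : ∀ z, r z ≤ r' z) (t : ℕ) (u : Fin n → Y) :
    Ecal Q r t u ≤ Ecal Q r' t u := by
  refine Finset.sum_le_sum fun z _ => ?_
  split_ifs
  · refine mul_le_mul_of_nonneg_left (h z) (Finset.prod_nonneg fun j _ => ?_)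
    split_ifs
    · exact hQ0 _ _ _
    · exact zero_le_one
  · exact le_rfl

lemma Ecal_add (r r' : (Fin n → Y) → ℝ) (t : ℕ) (u : Fin n → Y) :
    Ecal Q (fun z => r z + r' z) t u = Ecal Q r t u + Ecal Q r' t u := by
  unfold Ecal
  rw [← Finset.sum_add_distrib]
  refine Finset.sum_congr rfl fun z _ => ?_
  split_ifs
  · ring
  · ring

lemma Ecal_smul (a : ℝ) (r : (Fin n → Y) → ℝ) (t : ℕ) (u : Fin n → Y) :
    Ecal Q (fun z => a * r z) t u = a * Ecal Q r t u := by
  unfold Ecal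
  rw [Finset.mul_sum]
  refine Finset.sum_congr rfl fun z _ => ?_
  split_ifs
  · ring
  · ring

lemma Ecal_finsum {ι : Type*} (s : Finset ι) (F : ι → (Fin n → Y) → ℝ) (t : ℕ) (u : Fin n → Y) :
    Ecal Q (fun z => ∑ i ∈ s, F i z) t u = ∑ i ∈ s, Ecal Q (F i) t u := by
  classical
  induction s using Finset.induction with
  | empty =>
    simp only [Finset.sum_empty]
    have := Ecal_smul Q 0 (fun _ => (0:ℝ)) t u
    simpa using this
  | @insert _ _ hx ih =>
    rw [Finset.sum_insert hx, ← ih, ← Ecal_add]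
    simp_rw [Finset.sum_insert hx]

lemma Ecal_zero (r : (Fin n → Y) → ℝ) (u : Fin n → Y) :
    Ecal Q r 0 u = ∑ z : Fin n → Y, (∏ j : Fin n, Q j z (z j)) * r z := by
  unfold Ecal
  simp

end Aux


section Helpers

lemma prefixOf_congr {Y : Type*} {n : ℕ} (u u' : Fin n → Y) (i : Fin n)
    (h : ∀ j : Fin n, j.1 < i.1 → u j = u' j) : prefixOf u i = prefixOf u' i :=
  funext fun j => h ⟨j.1, j.2.trans i.2⟩ j.2

lemma prefixOf_update {Y : Type*} {n : ℕ} (u : Fin n → Y) (i : Fin n) (c : Y) :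
    prefixOf (Function.update u i c) i = prefixOf u i :=
  prefixOf_congr _ _ _ fun j hj =>
    Function.update_of_ne (Fin.ne_of_val_ne (Nat.ne_of_lt hj)) _ _

/-- Extend a prefix to a full sequence using a default value. -/
def extFun {Y : Type*} {n : ℕ} (y₀ : Y) (i : ℕ) (ypre : Fin i → Y) : Fin n → Y :=
  fun j => if h : j.1 < i then ypre ⟨j.1, h⟩ else y₀

lemma prefixOf_extFun {Y : Type*} {n : ℕ} (y₀ : Y) (i : Fin n) (ypre : Fin i.1 → Y) :
    prefixOf (extFun y₀ i.1 ypre) i = ypre := by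
  funext j
  simp only [prefixOf, extFun, j.2, dif_pos]

end Helpers

theorem dmc_feedback_game_iff_coding_scheme {X Y : Type*} [Fintype X] [Fintype Y]
    (p : X → Y → ℝ) (hp0 : ∀ x y, 0 ≤ p x y) (hp1 : ∀ x, ∑ y, p x y = 1)
    (n L : ℕ) (hn : 0 < n) (hL : 0 < L) (ε : ℝ) (hε0 : 0 < ε) (hε1 : ε < 1) :
    GuaranteedWin
      (fun _ : Fin 1 => ⋃ x : X, {a : Y → ℝ | ∑ y, p x y * a y ≤ 0}) n L ε
    ↔ ∃ (f : (i : Fin n) → Fin L → (Fin i.1 → Y) → X) (g : (Fin n → Y) → Fin L),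
        ∀ m : Fin L,
          ∑ y : Fin n → Y,
            (if g y = m then 0 else ∏ i, p (f i m (prefixOf y i)) (y i)) ≤ ε := by
  classical
  constructor
  · rintro ⟨x, w, dec, hmem, hscore⟩
    have hch : ∀ (i : Fin n) (m : Fin L) (ypre : Fin i.1 → Y),
        ∃ xx : X, ∑ c, p xx c * w i m ypre c ≤ 0 := by
      intro i m ypre
      have := hmem i m ypre
      simpa [Set.mem_iUnion] using this
    choose f hf using hch
    refine ⟨f, dec, fun m => ?_⟩
    rcases isEmpty_or_nonempty Y with hY | hY
    · haveI : IsEmpty (Fin n → Y) := ⟨fun y => isEmptyElim (y ⟨0, hn⟩)⟩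
      rw [Finset.univ_eq_empty, Finset.sum_empty]
      exact hε0.le
    obtain ⟨y₀⟩ := hY
    set u₀ : Fin n → Y := fun _ => y₀ with hu₀
    set Q : Fin n → (Fin n → Y) → Y → ℝ := fun i u c => p (f i m (prefixOf u i)) c with hQdef
    have hQpre : ∀ (i : Fin n) (u u' : Fin n → Y),
        (∀ j : Fin n, j.1 < i.1 → u j = u' j) → Q i u = Q i u' := by
      intro i u u' h
      simp only [hQdef, prefixOf_congr u u' i h]
    have hQ1 : ∀ (i : Fin n) (u : Fin n → Y), ∑ c, Q i u c = 1 := fun i u => hp1 _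
    have hQ0 : ∀ (i : Fin n) (u : Fin n → Y) (c : Y), 0 ≤ Q i u c := fun i u c => hp0 _ _
    set err : (Fin n → Y) → ℝ := fun z => if dec z = m then 0 else 1 with herrdef
    have hgoal : (∑ y : Fin n → Y, if dec y = m then 0 else ∏ i, p (f i m (prefixOf y i)) (y i))
        = Ecal Q err 0 u₀ := by
      rw [Ecal_zero]
      refine Finset.sum_congr rfl fun z _ => ?_
      by_cases h : dec z = m <;> simp [herrdef, h, hQdef]
    rw [hgoal]
    have h1 : ∀ z, err z ≤ ε + ∑ i : Fin n, w i m (prefixOf z i) (z i) := by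
      intro z
      have h := hscore m z
      simp only [ge_iff_le, herrdef] at h ⊢
      linarith
    have hone : Ecal Q (fun _ => (1:ℝ)) 0 u₀ = 1 :=
      Ecal_of_depends Q hQpre hQ1 (fun _ => (1:ℝ)) n 0 (by omega) (fun _ _ _ => rfl) u₀
    have heps : Ecal Q (fun _ => ε) 0 u₀ = ε := by
      have h2 : (fun _ : Fin n → Y => ε) = fun z => ε * (fun _ : Fin n → Y => (1:ℝ)) z := by
        funext z; ring
      rw [h2, Ecal_smul, hone, mul_one]
    have hterm : ∀ i : Fin n,
        Ecal Q (fun z => w i m (prefixOf z i) (z i)) 0 u₀ ≤ 0 := by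
      intro i
      refine Ecal_nonpos Q hQpre hQ1 hQ0 i _ ?_ ?_ n 0 (by omega) (Nat.zero_le _) u₀
      · intro u u' h
        rw [prefixOf_congr u u' i (fun j hj => h j (Nat.lt_succ_of_lt hj)),
          h i (Nat.lt_succ_self _)]
      · intro u
        have h3 : ∀ c : Y,
            (fun z => w i m (prefixOf z i) (z i)) (Function.update u i c)
              = w i m (prefixOf u i) c := by
          intro c
          simp only [Function.update_self, prefixOf_update]
        simp only [h3, hQdef]
        exact hf i m (prefixOf u i)
    calc Ecal Q err 0 u₀
        ≤ Ecal Q (fun z => ε + ∑ i : Fin n, w i m (prefixOf z i) (z i)) 0 u₀ :=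
          Ecal_mono Q hQ0 _ _ h1 0 u₀
      _ = Ecal Q (fun _ => ε) 0 u₀
            + Ecal Q (fun z => ∑ i : Fin n, w i m (prefixOf z i) (z i)) 0 u₀ :=
          Ecal_add Q _ _ 0 u₀
      _ = ε + ∑ i : Fin n, Ecal Q (fun z => w i m (prefixOf z i) (z i)) 0 u₀ := by
          rw [heps, Ecal_finsum]
      _ ≤ ε + 0 := by
          have := Finset.sum_nonpos (fun i (_ : i ∈ Finset.univ) => hterm i)
          linarith
      _ = ε := add_zero ε
  · rintro ⟨f, g, herr⟩
    rcases isEmpty_or_nonempty Y with hY | hY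
    · refine ⟨fun _ _ => 0, fun i m ypre => fun c => isEmptyElim c,
        fun y => isEmptyElim (y ⟨0, hn⟩), ?_, ?_⟩
      · intro i m ypre
        refine Set.mem_iUnion.2 ⟨f ⟨0, hn⟩ m (fun j => j.elim0), ?_⟩
        simp
      · intro m y
        exact isEmptyElim (y ⟨0, hn⟩)
    obtain ⟨y₀⟩ := hY
    set Q : Fin L → Fin n → (Fin n → Y) → Y → ℝ :=
      fun m i u c => p (f i m (prefixOf u i)) c with hQdef
    set err : Fin L → (Fin n → Y) → ℝ := fun m z => if g z = m then 0 else 1 with herrdef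
    have hQpre : ∀ (m : Fin L) (i : Fin n) (u u' : Fin n → Y),
        (∀ j : Fin n, j.1 < i.1 → u j = u' j) → Q m i u = Q m i u' := by
      intro m i u u' h
      simp only [hQdef, prefixOf_congr u u' i h]
    have hQ1 : ∀ (m : Fin L) (i : Fin n) (u : Fin n → Y), ∑ c, Q m i u c = 1 :=
      fun m i u => hp1 _
    refine ⟨fun _ _ => 0,
      fun i m ypre c =>
        Ecal (Q m) (err m) (i.1+1) (Function.update (extFun y₀ i.1 ypre) i c)
          - Ecal (Q m) (err m) i.1 (extFun y₀ i.1 ypre),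
      g, ?_, ?_⟩
    · intro i m ypre
      refine Set.mem_iUnion.2 ⟨f i m ypre, ?_⟩
      show (∑ c, p (f i m ypre) c *
        (Ecal (Q m) (err m) (i.1+1) (Function.update (extFun y₀ i.1 ypre) i c)
          - Ecal (Q m) (err m) i.1 (extFun y₀ i.1 ypre))) ≤ 0
      have hq : ∀ c, p (f i m ypre) c = Q m i (extFun y₀ i.1 ypre) c := by
        intro c
        simp only [hQdef, prefixOf_extFun]
      refine le_of_eq ?_
      calc (∑ c, p (f i m ypre) c *
            (Ecal (Q m) (err m) (i.1+1) (Function.update (extFun y₀ i.1 ypre) i c)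
              - Ecal (Q m) (err m) i.1 (extFun y₀ i.1 ypre)))
          = (∑ c, Q m i (extFun y₀ i.1 ypre) c *
                Ecal (Q m) (err m) (i.1+1) (Function.update (extFun y₀ i.1 ypre) i c))
            - (∑ c, Q m i (extFun y₀ i.1 ypre) c) * Ecal (Q m) (err m) i.1 (extFun y₀ i.1 ypre) := by
            simp_rw [hq, mul_sub]
            rw [Finset.sum_sub_distrib, Finset.sum_mul]
        _ = 0 := by
            rw [← Ecal_succ (Q m) (hQpre m) (err m) i (extFun y₀ i.1 ypre), hQ1 m i, one_mul,
              sub_self]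
    · intro m y
      have hAB : ∀ i : Fin n,
          (Ecal (Q m) (err m) (i.1+1)
              (Function.update (extFun y₀ i.1 (prefixOf y i)) i (y i))
            - Ecal (Q m) (err m) i.1 (extFun y₀ i.1 (prefixOf y i)))
          = Ecal (Q m) (err m) (i.1+1) y - Ecal (Q m) (err m) i.1 y := by
        intro i
        have hA : Ecal (Q m) (err m) (i.1+1)
            (Function.update (extFun y₀ i.1 (prefixOf y i)) i (y i))
            = Ecal (Q m) (err m) (i.1+1) y := by
          refine Ecal_depends _ _ _ _ _ fun j hj => ?_
          rcases Nat.lt_succ_iff_lt_or_eq.1 hj with h | h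
          · rw [Function.update_of_ne (Fin.ne_of_val_ne (Nat.ne_of_lt h))]
            simp only [extFun, h, dif_pos]
            rfl
          · have : j = i := Fin.ext h
            subst this
            rw [Function.update_self]
        have hB : Ecal (Q m) (err m) i.1 (extFun y₀ i.1 (prefixOf y i))
            = Ecal (Q m) (err m) i.1 y := by
          refine Ecal_depends _ _ _ _ _ fun j hj => ?_
          simp only [extFun, hj, dif_pos]
          rfl
        rw [hA, hB]
      have htel : (∑ i : Fin n,
          (Ecal (Q m) (err m) (i.1+1) y - Ecal (Q m) (err m) i.1 y))
          = Ecal (Q m) (err m) n y - Ecal (Q m) (err m) 0 y := by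
        rw [Fin.sum_univ_eq_sum_range
          (fun t => Ecal (Q m) (err m) (t+1) y - Ecal (Q m) (err m) t y) n]
        exact Finset.sum_range_sub (fun t => Ecal (Q m) (err m) t y) n
      have hG0 : Ecal (Q m) (err m) 0 y ≤ ε := by
        rw [Ecal_zero]
        have h := herr m
        have h2 : (∑ z : Fin n → Y, (∏ j, Q m j z (z j)) * err m z)
            = ∑ z : Fin n → Y, (if g z = m then 0 else ∏ i, p (f i m (prefixOf z i)) (z i)) := by
          refine Finset.sum_congr rfl fun z _ => ?_
          by_cases hz : g z = m <;> simp [herrdef, hz, hQdef]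
        rw [h2]
        exact h
      have htop : Ecal (Q m) (err m) n y = err m y := Ecal_top _ _ _
      simp only [hAB, ge_iff_le]
      rw [htel, htop]
      have : err m y = (if g y = m then 0 else 1) := rfl
      rw [this] at *
      linarith

end
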